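/- (Proposition 4.1 of the paper, abstract Banach-space form.) Let E be a real Banach space, m ≥ 1 an integer, and let τ, σ : ℝ → (E →L[ℝ] E) be 2m-times continuously differentiable maps into the Banach space of bounded linear operators on E (norm topology), satisfying τ(0) = σ(0) = id, τ(−μ) ∘ τ(μ) = id and σ(−μ) ∘ σ(μ) = id for all μ ∈ ℝ (time-reversal symmetry). If the operator-valued function μ ↦ τ(μ) − σ(μ) has vanishing derivatives at μ = 0 of every order j = 0, 1, …, 2m−1, then its derivative of order 2m at μ = 0 also vanishes. -/

import Mathlib

open Finset

section aux

variable {A : Type*} [NormedRing A] [NormedAlgebra ℝ A]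

theorem aux_iteratedDeriv_add {n : ℕ} {f g : ℝ → A} (hf : ContDiff ℝ n f) (hg : ContDiff ℝ n g)
    (x : ℝ) :
    iteratedDeriv n (fun y => f y + g y) x = iteratedDeriv n f x + iteratedDeriv n g x := by
  simp_rw [← iteratedDerivWithin_univ]
  exact iteratedDerivWithin_add (Set.mem_univ x) uniqueDiffOn_univ hf.contDiffWithinAt hg.contDiffWithinAt

theorem aux_iteratedDeriv_sub {n : ℕ} {f g : ℝ → A} (hf : ContDiff ℝ n f) (hg : ContDiff ℝ n g)
    (x : ℝ) :
    iteratedDeriv n (fun y => f y - g y) x = iteratedDeriv n f x - iteratedDeriv n g x := by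
  simp_rw [← iteratedDerivWithin_univ]
  exact iteratedDerivWithin_sub (Set.mem_univ x) uniqueDiffOn_univ hf.contDiffWithinAt hg.contDiffWithinAt

/-- Leibniz rule for iterated derivatives of a product in a normed algebra. -/
theorem aux_leibniz : ∀ (n : ℕ) (f g : ℝ → A), ContDiff ℝ n f → ContDiff ℝ n g →
    iteratedDeriv n (fun y => f y * g y) = fun x =>
      ∑ k ∈ Finset.range (n + 1),
        (n.choose k : ℝ) • (iteratedDeriv k f x * iteratedDeriv (n - k) g x) := by
  intro n
  induction n with
  | zero => intro f g _ _; ext x; simp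
  | succ n ih =>
    intro f g hf hg
    have hf' : ContDiff ℝ n f := hf.of_le (by exact_mod_cast Nat.le_succ n)
    have hg' : ContDiff ℝ n g := hg.of_le (by exact_mod_cast Nat.le_succ n)
    have hdf : ∀ k, k ≤ n → ∀ x : ℝ, DifferentiableAt ℝ (iteratedDeriv k f) x := fun k hk x =>
      (hf.differentiable_iteratedDeriv k
        (by exact_mod_cast Nat.lt_succ_of_le hk)).differentiableAt
    have hdg : ∀ k, k ≤ n → ∀ x : ℝ, DifferentiableAt ℝ (iteratedDeriv k g) x := fun k hk x =>
      (hg.differentiable_iteratedDeriv k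
        (by exact_mod_cast Nat.lt_succ_of_le hk)).differentiableAt
    ext x
    rw [iteratedDeriv_succ, ih f g hf' hg']
    rw [deriv_fun_sum (fun k hk => ?_)]
    rotate_left
    · have hk := Nat.lt_succ_iff.mp (mem_range.mp hk)
      exact ((hdf k hk x).mul (hdg (n - k) (Nat.sub_le n k) x)).const_smul (n.choose k : ℝ)
    have step : ∀ k ∈ Finset.range (n + 1),
        deriv (fun x => (n.choose k : ℝ) •
            (iteratedDeriv k f x * iteratedDeriv (n - k) g x)) x
          = (n.choose k : ℝ) •
              (iteratedDeriv (k + 1) f x * iteratedDeriv (n + 1 - (k + 1)) g x)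
            + (n.choose k : ℝ) •
              (iteratedDeriv k f x * iteratedDeriv (n + 1 - k) g x) := by
      intro k hk
      have hk := Nat.lt_succ_iff.mp (mem_range.mp hk)
      rw [deriv_fun_const_smul (f := fun y => iteratedDeriv k f y * iteratedDeriv (n - k) g y) _ ((hdf k hk x).mul (hdg (n - k) (Nat.sub_le n k) x)),
        deriv_fun_mul (hdf k hk x) (hdg (n - k) (Nat.sub_le n k) x), smul_add,
        ← iteratedDeriv_succ, ← iteratedDeriv_succ]
      have e1 : n + 1 - (k + 1) = n - k := by omega
      have e2 : n - k + 1 = n + 1 - k := by omega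
      rw [e1, e2]
    rw [Finset.sum_congr rfl step]
    -- now the binomial recombination
    set a : ℕ → A := fun j => iteratedDeriv j f x * iteratedDeriv (n + 1 - j) g x with ha
    rw [Finset.sum_add_distrib]
    rw [Finset.sum_range_succ' (fun k => ((n + 1).choose k : ℝ) • a k) (n + 1)]
    simp only [Nat.choose_succ_succ, Nat.cast_add, add_smul, Finset.sum_add_distrib,
      Nat.choose_zero_right, Nat.cast_one, one_smul]
    have h2 : ∑ i ∈ Finset.range (n + 1), (↑(n.choose (i + 1)) : ℝ) • a (i + 1) + a 0
        = ∑ k ∈ Finset.range (n + 1), (n.choose k : ℝ) • a k := by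
      have := Finset.sum_range_succ' (fun k => (n.choose k : ℝ) • a k) (n + 1)
      rw [Finset.sum_range_succ (fun k => (n.choose k : ℝ) • a k) (n + 1)] at this
      simp only [Nat.choose_succ_self, Nat.cast_zero, zero_smul, add_zero,
        Nat.choose_zero_right, Nat.cast_one, one_smul] at this
      exact this.symm
    rw [add_assoc, h2]

end aux



/-- Proposition 4.1 of the paper (abstract Banach-space form): if `τ` and `σ` are
time-reversal symmetric `2m`-times continuously differentiable operator-valued maps with
`τ 0 = σ 0 = id`, and `τ - σ` has vanishing derivatives at `0` up to order `2m - 1`, then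
also its derivative of order `2m` at `0` vanishes. -/
theorem time_reversal_symmetric_order_improvement
    {E : Type*} [NormedAddCommGroup E] [NormedSpace ℝ E] [CompleteSpace E]
    (m : ℕ) (hm : 1 ≤ m) (τ σ : ℝ → E →L[ℝ] E)
    (hτ : ContDiff ℝ (2 * m : ℕ) τ) (hσ : ContDiff ℝ (2 * m : ℕ) σ)
    (hτ0 : τ 0 = ContinuousLinearMap.id ℝ E)
    (hσ0 : σ 0 = ContinuousLinearMap.id ℝ E)
    (hτrev : ∀ μ : ℝ, (τ (-μ)).comp (τ μ) = ContinuousLinearMap.id ℝ E)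
    (hσrev : ∀ μ : ℝ, (σ (-μ)).comp (σ μ) = ContinuousLinearMap.id ℝ E)
    (hlow : ∀ j : ℕ, j < 2 * m → iteratedDeriv j (fun μ => τ μ - σ μ) 0 = 0) :
    iteratedDeriv (2 * m) (fun μ => τ μ - σ μ) 0 = 0 := by
  set n := 2 * m with hn
  have hn1 : 1 ≤ n := by omega
  set δ : ℝ → E →L[ℝ] E := fun μ => τ μ - σ μ with hδdef
  have hδ : ContDiff ℝ (n : ℕ) δ := hτ.sub hσ
  -- the mul versions of the reversal identities
  have hτrev' : ∀ μ : ℝ, τ (-μ) * τ μ = 1 := fun μ => hτrev μ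
  have hσrev' : ∀ μ : ℝ, σ (-μ) * σ μ = 1 := fun μ => hσrev μ
  -- pointwise identity
  have hpt : ∀ μ : ℝ, δ μ =
      -δ (-μ) - (σ (-μ) - 1) * δ μ - δ (-μ) * (σ μ - 1) - δ (-μ) * δ μ := by
    intro μ
    have expand : -δ (-μ) - (σ (-μ) - 1) * δ μ - δ (-μ) * (σ μ - 1) - δ (-μ) * δ μ - δ μ
        = σ (-μ) * σ μ - τ (-μ) * τ μ := by
      simp only [hδdef]; noncomm_ring
    rw [hτrev' μ, hσrev' μ, sub_self] at expand
    exact (sub_eq_zero.mp expand).symm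
  -- smoothness of the pieces
  have hneg : ContDiff ℝ (n : ℕ) (fun μ : ℝ => -μ) := contDiff_neg
  have hδneg : ContDiff ℝ (n : ℕ) (fun μ => δ (-μ)) := hδ.comp hneg
  have hσm1 : ContDiff ℝ (n : ℕ) (fun μ => σ μ - 1) := hσ.sub contDiff_const
  have hσnegm1 : ContDiff ℝ (n : ℕ) (fun μ => σ (-μ) - 1) := (hσ.comp hneg).sub contDiff_const
  -- derivatives of δ∘neg at 0
  have hδneg_low : ∀ j : ℕ, j < n → iteratedDeriv j (fun μ => δ (-μ)) 0 = 0 := by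
    intro j hj
    rw [iteratedDeriv_comp_neg j δ 0, neg_zero, hlow j hj, smul_zero]
  have hδ0 : δ 0 = 0 := by
    have := hlow 0 (by omega); rwa [iteratedDeriv_zero] at this
  have hσ0' : σ 0 - 1 = 0 := by
    rw [hσ0]; exact sub_eq_zero.mpr rfl
  -- term 1 : (σ(-μ)-1) * δ μ
  have hT1 : iteratedDeriv n (fun μ => (σ (-μ) - 1) * δ μ) 0 = 0 := by
    rw [aux_leibniz n _ _ hσnegm1 hδ]
    refine Finset.sum_eq_zero fun k hk => ?_
    rcases Nat.eq_zero_or_pos k with rfl | hkpos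
    · rw [iteratedDeriv_zero]
      simp only [neg_zero, hσ0']
      rw [zero_mul, smul_zero]
    · rw [hlow (n - k) (by omega), mul_zero, smul_zero]
  -- term 2 : δ(-μ) * (σ μ - 1)
  have hT2 : iteratedDeriv n (fun μ => δ (-μ) * (σ μ - 1)) 0 = 0 := by
    rw [aux_leibniz n _ _ hδneg hσm1]
    refine Finset.sum_eq_zero fun k hk => ?_
    have hk' : k ≤ n := Nat.lt_succ_iff.mp (Finset.mem_range.mp hk)
    rcases eq_or_lt_of_le hk' with rfl | hklt
    · have : n - n = 0 := Nat.sub_self n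
      rw [this, iteratedDeriv_zero, hσ0', mul_zero, smul_zero]
    · rw [hδneg_low k hklt, zero_mul, smul_zero]
  -- term 3 : δ(-μ) * δ μ
  have hT3 : iteratedDeriv n (fun μ => δ (-μ) * δ μ) 0 = 0 := by
    rw [aux_leibniz n _ _ hδneg hδ]
    refine Finset.sum_eq_zero fun k hk => ?_
    have hk' : k ≤ n := Nat.lt_succ_iff.mp (Finset.mem_range.mp hk)
    rcases eq_or_lt_of_le hk' with rfl | hklt
    · have : n - n = 0 := Nat.sub_self n
      rw [this, iteratedDeriv_zero, hδ0, mul_zero, smul_zero]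
    · rw [hδneg_low k hklt, zero_mul, smul_zero]
  -- put it together
  have hfun : δ = fun μ => -δ (-μ) - (σ (-μ) - 1) * δ μ - δ (-μ) * (σ μ - 1) - δ (-μ) * δ μ :=
    funext hpt
  have hD : iteratedDeriv n δ 0 =
      iteratedDeriv n
        (fun μ => -δ (-μ) - (σ (-μ) - 1) * δ μ - δ (-μ) * (σ μ - 1) - δ (-μ) * δ μ) 0 := by
    conv_lhs => rw [hfun]
  have hC1 : ContDiff ℝ (n : ℕ) (fun μ => -δ (-μ)) := hδneg.neg
  have hC2 : ContDiff ℝ (n : ℕ) (fun μ => (σ (-μ) - 1) * δ μ) := hσnegm1.mul hδ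
  have hC3 : ContDiff ℝ (n : ℕ) (fun μ => δ (-μ) * (σ μ - 1)) := hδneg.mul hσm1
  have hC4 : ContDiff ℝ (n : ℕ) (fun μ => δ (-μ) * δ μ) := hδneg.mul hδ
  rw [aux_iteratedDeriv_sub ((hC1.sub hC2).sub hC3) hC4,
    aux_iteratedDeriv_sub (hC1.sub hC2) hC3,
    aux_iteratedDeriv_sub hC1 hC2] at hD
  have hneg' : iteratedDeriv n (fun μ => -δ (-μ)) 0 = -iteratedDeriv n δ 0 := by
    have : iteratedDeriv n (fun μ => δ (-μ)) 0 = iteratedDeriv n δ 0 := by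
      rw [iteratedDeriv_comp_neg n δ 0, neg_zero, hn]
      rw [show ((-1 : ℝ) ^ (2 * m)) = 1 from (even_two_mul m).neg_one_pow, one_smul]
    rw [iteratedDeriv_fun_neg, this]
  rw [hneg', hT1, hT2, hT3, sub_zero, sub_zero, sub_zero] at hD
  have h2 : iteratedDeriv n δ 0 + iteratedDeriv n δ 0 = 0 :=
    eq_neg_iff_add_eq_zero.mp hD
  have := congrArg (fun z => ((2 : ℝ)⁻¹) • z) h2
  simpa [smul_add, smul_zero, ← two_smul ℝ, smul_smul] using this
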